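/- Under the singleton-sampling setup, the probability that exactly one event occurs is at least one quarter: P(N = 1) ≥ 1/4. -/

import Mathlib

open Finset

-- real-analytic core
lemma key_real {n : ℕ} (s : Fin n → ℝ) (hs : ∀ ℓ, 0 ≤ s ℓ)
    (r : ℝ) (hr : 0 < r) (hsum : ∑ ℓ, s ℓ = r) :
    (1:ℝ)/4 ≤ ∑ ℓ, ∏ j, (if j = ℓ then s j / (s j + r) else 1 - s j / (s j + r)) := by
  have hpos : ∀ j, 0 < s j + r := fun j => add_pos_of_nonneg_of_pos (hs j) hr
  have hterm : ∀ ℓ j : Fin n, (if j = ℓ then s j / (s j + r) else 1 - s j / (s j + r))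
      = (r / (s j + r)) * (if j = ℓ then s j / r else 1) := by
    intro ℓ j
    have h2 := (hpos j).ne'
    have h3 := hr.ne'
    by_cases h : j = ℓ
    · simp only [h, if_true]
      have h4 := (hpos ℓ).ne'
      field_simp
    · simp only [if_neg h, mul_one]
      field_simp
      ring
  have hprod : ∀ ℓ : Fin n, ∏ j, (if j = ℓ then s j / (s j + r) else 1 - s j / (s j + r))
      = (∏ j, r / (s j + r)) * (s ℓ / r) := by
    intro ℓ
    simp_rw [hterm, Finset.prod_mul_distrib]
    congr 1
    simp [Finset.prod_ite_eq' Finset.univ ℓ (fun j => s j / r)]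
  simp_rw [hprod, ← Finset.mul_sum, ← Finset.sum_div, hsum, div_self hr.ne', mul_one]
  -- now show 1/4 ≤ ∏ j, r/(s j + r)
  have h1 : (∏ j, r / (s j + r)) = (∏ j, (s j + r)/r)⁻¹ := by
    rw [← Finset.prod_inv_distrib]
    exact Finset.prod_congr rfl fun j _ => (inv_div _ _).symm
  rw [h1]
  have hP4 : ∏ j, (s j + r)/r ≤ 4 := by
    have hle : ∏ j, (s j + r)/r ≤ ∏ j : Fin n, Real.exp (s j / r) := by
      apply Finset.prod_le_prod
      · intro j _; exact div_nonneg (hpos j).le hr.le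
      · intro j _
        have := Real.add_one_le_exp (s j / r)
        have h2 : (s j + r)/r = s j / r + 1 := by field_simp
        linarith
    rw [← Real.exp_sum, ← Finset.sum_div, hsum, div_self hr.ne'] at hle
    have := Real.exp_one_lt_d9
    linarith
  have hPpos : 0 < ∏ j, (s j + r)/r := by
    exact Finset.prod_pos fun j _ => div_pos (hpos j) hr
  calc (1:ℝ)/4 = 4⁻¹ := by norm_num
    _ ≤ (∏ j, (s j + r)/r)⁻¹ := inv_anti₀ hPpos hP4

open MeasureTheory ProbabilityTheory
open scoped Classical

/-- Singleton sampling: the probability that exactly one event occurs is at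
least `1/4`. -/
theorem prob_one_ge_quarter {Ω : Type*} [MeasurableSpace Ω]
    (P : Measure Ω) [IsProbabilityMeasure P]
    {n : ℕ} (hn : 1 ≤ n) (s : Fin n → ℝ) (hs : ∀ ℓ, 0 ≤ s ℓ)
    (r : ℝ) (hr : 0 < r) (hsum : ∑ ℓ, s ℓ = r)
    (γ : Fin n → ℝ) (hγ : ∀ ℓ, γ ℓ = s ℓ / (s ℓ + r))
    (E : Fin n → Set Ω) (hmeas : ∀ ℓ, MeasurableSet (E ℓ))
    (hind : iIndepSet E P)
    (hprob : ∀ ℓ, P (E ℓ) = ENNReal.ofReal (γ ℓ))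
    (N : Ω → ℕ) (hN : ∀ ω, N ω = (Finset.univ.filter fun ℓ => ω ∈ E ℓ).card) :
    P {ω | N ω = 1} ≥ 1 / 4 := by
  have hpos : ∀ j, 0 < s j + r := fun j => add_pos_of_nonneg_of_pos (hs j) hr
  have hγ0 : ∀ j, 0 ≤ γ j := fun j => (hγ j) ▸ div_nonneg (hs j) (hpos j).le
  have hγ1 : ∀ j, γ j ≤ 1 := fun j => (hγ j) ▸
    (div_le_one (hpos j)).2 (le_add_of_nonneg_right hr.le)
  -- the events B ℓ j and A ℓ
  set B : Fin n → Fin n → Set Ω := fun ℓ j => if j = ℓ then E j else (E j)ᶜ with hB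
  set A : Fin n → Set Ω := fun ℓ => ⋂ j, B ℓ j with hA
  -- real-valued probabilities
  set g : Fin n → Fin n → ℝ := fun ℓ j => if j = ℓ then γ j else 1 - γ j with hg
  have hBmeas : ∀ ℓ j, MeasurableSet (B ℓ j) := by
    intro ℓ j
    by_cases h : j = ℓ
    · simp only [hB, if_pos h]; exact hmeas j
    · simp only [hB, if_neg h]; exact (hmeas j).compl
  have hBprob : ∀ ℓ j, P (B ℓ j) = ENNReal.ofReal (g ℓ j) := by
    intro ℓ j
    by_cases h : j = ℓ
    · simp only [hB, hg, if_pos h]; exact hprob j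
    · simp only [hB, hg, if_neg h]
      rw [prob_compl_eq_one_sub (hmeas j), hprob j,
        ← ENNReal.ofReal_one, ← ENNReal.ofReal_sub _ (hγ0 j)]
  -- independence gives the product formula
  have hAP : ∀ ℓ, P (A ℓ) = ENNReal.ofReal (∏ j, g ℓ j) := by
    intro ℓ
    have h1 : P (⋂ j ∈ Finset.univ, B ℓ j) = ∏ j, P (B ℓ j) := by
      refine (iIndepSet_iff E P).1 hind Finset.univ fun j _ => ?_
      by_cases h : j = ℓ
      · simp only [hB, if_pos h]
        exact MeasurableSpace.measurableSet_generateFrom rfl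
      · simp only [hB, if_neg h]
        have : MeasurableSet[MeasurableSpace.generateFrom {E j}] (E j) :=
          MeasurableSpace.measurableSet_generateFrom rfl
        exact this.compl
    have h2 : (⋂ j ∈ Finset.univ, B ℓ j) = A ℓ := by simp [hA]
    rw [← h2, h1]
    rw [ENNReal.ofReal_prod_of_nonneg]
    · exact Finset.prod_congr rfl fun j _ => hBprob ℓ j
    · intro j _
      by_cases h : j = ℓ
      · simp only [hg, if_pos h]; exact hγ0 j
      · simp only [hg, if_neg h]; linarith [hγ1 j]
  -- A ℓ ⊆ {N = 1}
  have hsub : ∀ ℓ, A ℓ ⊆ {ω | N ω = 1} := by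
    intro ℓ ω hω
    have hω' : ∀ j, ω ∈ B ℓ j := Set.mem_iInter.1 hω
    have hfil : (Finset.univ.filter fun j => ω ∈ E j) = {ℓ} := by
      ext j
      simp only [Finset.mem_filter, Finset.mem_univ, true_and, Finset.mem_singleton]
      constructor
      · intro hj
        by_contra h
        have := hω' j
        simp only [hB, if_neg h] at this
        exact this hj
      · intro h
        have := hω' j
        simp only [hB, if_pos h] at this
        exact this
    simp only [Set.mem_setOf_eq, hN ω, hfil, Finset.card_singleton]
  -- pairwise disjoint
  have hdisj : (↑(Finset.univ : Finset (Fin n)) : Set (Fin n)).PairwiseDisjoint A := by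
    intro ℓ _ ℓ' _ hne
    refine Set.disjoint_left.2 fun ω hω hω' => ?_
    have h1 := Set.mem_iInter.1 hω ℓ'
    have h2 := Set.mem_iInter.1 hω' ℓ'
    simp only [hB, if_neg (Ne.symm hne), if_pos rfl] at h1 h2
    exact h1 h2
  -- assemble
  have hge : ∑ ℓ, P (A ℓ) ≤ P {ω | N ω = 1} := by
    rw [← measure_biUnion_finset hdisj fun ℓ _ => (MeasurableSet.iInter fun j => hBmeas ℓ j)]
    exact measure_mono (Set.iUnion₂_subset fun ℓ _ => hsub ℓ)
  have hsumv : ∑ ℓ, P (A ℓ) = ENNReal.ofReal (∑ ℓ, ∏ j, g ℓ j) := by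
    rw [ENNReal.ofReal_sum_of_nonneg]
    · exact Finset.sum_congr rfl fun ℓ _ => hAP ℓ
    · intro ℓ _
      refine Finset.prod_nonneg fun j _ => ?_
      by_cases h : j = ℓ
      · simp only [hg, if_pos h]; exact hγ0 j
      · simp only [hg, if_neg h]; linarith [hγ1 j]
  have hkey : (1:ℝ)/4 ≤ ∑ ℓ, ∏ j, g ℓ j := by
    have := key_real s hs r hr hsum
    simpa only [hg, hγ] using this
  calc (1/4 : ENNReal) = ENNReal.ofReal (1/4) := by
        rw [ENNReal.ofReal_div_of_pos (by norm_num), ENNReal.ofReal_one,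
          ENNReal.ofReal_ofNat]
    _ ≤ ENNReal.ofReal (∑ ℓ, ∏ j, g ℓ j) := ENNReal.ofReal_le_ofReal hkey
    _ = ∑ ℓ, P (A ℓ) := hsumv.symm
    _ ≤ P {ω | N ω = 1} := hge
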